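/- Let D be a field of characteristic 2 and let f, g : D → D be additive maps satisfying f(x) + x^2 * g(x⁻¹) = 0 for every nonzero x ∈ D. Then f(a^2 * b) = a^2 * g(b) for all a, b ∈ D. -/

import Mathlib

theorem stmt10 (D : Type*) [Field D] (hchar : ringChar D = 2)
    (f g : D → D)
    (hf : ∀ x y : D, f (x + y) = f x + f y)
    (hg : ∀ x y : D, g (x + y) = g x + g y)
    (hid : ∀ x : D, x ≠ 0 → f x + x ^ 2 * g x⁻¹ = 0) :
    ∀ a b : D, f (a ^ 2 * b) = a ^ 2 * g b := by
  have h2 : (2 : D) = 0 := by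
    haveI : CharP D 2 := ringChar.of_eq hchar
    exact_mod_cast CharP.cast_eq_zero D 2
  have f0 : f 0 = 0 := by simpa using hf 0 0
  have g0 : g 0 = 0 := by simpa using hg 0 0
  have hfg : ∀ x : D, x ≠ 0 → f x = x ^ 2 * g x⁻¹ := fun x hx => by
    linear_combination hid x hx - x ^ 2 * g x⁻¹ * h2
  have hgf : ∀ x : D, x ≠ 0 → g x = x ^ 2 * f x⁻¹ := fun x hx => by
    have h := hid x⁻¹ (inv_ne_zero hx)
    rw [inv_inv] at h
    have hxx : x * x⁻¹ = 1 := mul_inv_cancel₀ hx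
    linear_combination - x^2*h + g x*h2 + g x*(x*x⁻¹+1)*hxx
  have hc : g 1 = f 1 := by
    have h := hid 1 one_ne_zero
    simp at h
    linear_combination h - f 1 * h2
  have key1 : ∀ x : D, x ≠ 0 → x + 1 ≠ 0 → (x*(x+1))⁻¹ = x⁻¹ + (x+1)⁻¹ := by
    intro x hx hx1
    field_simp
    linear_combination -x * h2
  have hx1ne : ∀ x : D, x ≠ 1 → x + 1 ≠ 0 := by
    intro x hx1 h
    exact hx1 (by linear_combination h - h2)
  have hsqf : ∀ x : D, f (x ^ 2) = f 1 * x ^ 2 := by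
    intro x
    rcases eq_or_ne x 0 with rfl | hx
    · simpa using f0
    rcases eq_or_ne x 1 with rfl | hx1
    · simp
    have hv : x + 1 ≠ 0 := hx1ne x hx1
    have e1 := hfg (x*(x+1)) (mul_ne_zero hx hv)
    rw [key1 x hx hv, hg] at e1
    have e2 : f (x*(x+1)) = f (x^2) + f x := by
      rw [show x*(x+1) = x^2 + x by ring, hf]
    have e3 := hfg x hx
    have e4 : f (x+1) = f x + f 1 := hf x 1
    have e5 := hfg (x+1) hv
    linear_combination e1 - e2 - (x+1)^2 * e3 - x^2 * e5 + x^2 * e4 + (x^2+x)*(f x)*h2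
  have hsqg : ∀ x : D, g (x ^ 2) = f 1 * x ^ 2 := by
    intro x
    rcases eq_or_ne x 0 with rfl | hx
    · simpa using g0
    rcases eq_or_ne x 1 with rfl | hx1
    · simpa using hc
    have hv : x + 1 ≠ 0 := hx1ne x hx1
    have e1 := hgf (x*(x+1)) (mul_ne_zero hx hv)
    rw [key1 x hx hv, hf] at e1
    have e2 : g (x*(x+1)) = g (x^2) + g x := by
      rw [show x*(x+1) = x^2 + x by ring, hg]
    have e3 := hgf x hx
    have e4 : g (x+1) = g x + g 1 := hg x 1
    have e5 := hgf (x+1) hv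
    linear_combination e1 - e2 - (x+1)^2 * e3 - x^2 * e5 + x^2 * e4 + (x^2+x)*(g x)*h2 + x^2 * hc
  have key2 : ∀ x : D, x ≠ 0 → x + 1 ≠ 0 → (x^2*(x+1))⁻¹ = x⁻¹ + (x^2)⁻¹ + (x+1)⁻¹ := by
    intro x hx hx1
    field_simp
    ring_nf
    linear_combination (-x - x^2) * h2
  have hcf : ∀ x : D, f (x ^ 3) = x ^ 2 * f x := by
    intro x
    rcases eq_or_ne x 0 with rfl | hx
    · simpa using f0
    rcases eq_or_ne x 1 with rfl | hx1
    · simp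
    have hv : x + 1 ≠ 0 := hx1ne x hx1
    have e1 := hfg (x^2*(x+1)) (mul_ne_zero (pow_ne_zero 2 hx) hv)
    rw [key2 x hx hv, hg, hg] at e1
    have e2 : f (x^2*(x+1)) = f (x^3) + f (x^2) := by
      rw [show x^2*(x+1) = x^3 + x^2 by ring, hf]
    have e3 := hfg x hx
    have e4 : f (x+1) = f x + f 1 := hf x 1
    have e5 := hfg (x+1) hv
    have e6 : x^2 * g ((x^2)⁻¹) = f 1 := by
      have h := hsqg x⁻¹
      rw [inv_pow] at h
      rw [h]
      field_simp
    have e7 := hsqf x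
    linear_combination e1 - e2 - e7 - x^2*(x+1)^2*e3 + x^2*(x+1)^2*e6 - x^4*e5 + x^4*e4 + (x^4+x^3)*(f x + f 1)*h2
  have hcg : ∀ x : D, g (x ^ 3) = x ^ 2 * g x := by
    intro x
    rcases eq_or_ne x 0 with rfl | hx
    · simpa using g0
    rcases eq_or_ne x 1 with rfl | hx1
    · simp
    have hv : x + 1 ≠ 0 := hx1ne x hx1
    have e1 := hgf (x^2*(x+1)) (mul_ne_zero (pow_ne_zero 2 hx) hv)
    rw [key2 x hx hv, hf, hf] at e1
    have e2 : g (x^2*(x+1)) = g (x^3) + g (x^2) := by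
      rw [show x^2*(x+1) = x^3 + x^2 by ring, hg]
    have e3 := hgf x hx
    have e4 : g (x+1) = g x + g 1 := hg x 1
    have e5 := hgf (x+1) hv
    have e6 : x^2 * f ((x^2)⁻¹) = f 1 := by
      have h := hsqf x⁻¹
      rw [inv_pow] at h
      rw [h]
      field_simp
    have e7 := hsqg x
    linear_combination e1 - e2 - e7 - x^2*(x+1)^2*e3 + x^2*(x+1)^2*e6 - x^4*e5 + x^4*e4 + (x^4+x^3)*(g x + f 1)*h2 - x^4*hc + (g 1 - f 1)*x^4*h2
  have hAf : ∀ x y : D, f (x^2*y) + f (x*y^2) = x^2 * f y + y^2 * f x := by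
    intro x y
    have e1 : f ((x+y)^3) = (x+y)^2 * f (x+y) := hcf (x+y)
    rw [show (x+y)^3 = x^3 + (x^2*y + (x*y^2 + y^3)) by linear_combination (x^2*y+x*y^2)*h2,
        hf, hf, hf, hf] at e1
    linear_combination e1 - hcf x - hcf y + x*y*(f x + f y)*h2
  have hAg : ∀ x y : D, g (x^2*y) + g (x*y^2) = x^2 * g y + y^2 * g x := by
    intro x y
    have e1 : g ((x+y)^3) = (x+y)^2 * g (x+y) := hcg (x+y)
    rw [show (x+y)^3 = x^3 + (x^2*y + (x*y^2 + y^3)) by linear_combination (x^2*y+x*y^2)*h2,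
        hg, hg, hg, hg] at e1
    linear_combination e1 - hcg x - hcg y + x*y*(g x + g y)*h2
  have hB : ∀ x y : D, x ≠ 0 → y ≠ 0 →
      y^2 * g (x^2*y) + x^2 * g (x*y^2) = x^2*y^2*(g x + g y) := by
    intro x y hx hy
    have hinst := hAf x⁻¹ y⁻¹
    rw [show x⁻¹^2*y⁻¹ = (x^2*y)⁻¹ by rw [mul_inv, inv_pow],
        show x⁻¹*y⁻¹^2 = (x*y^2)⁻¹ by rw [mul_inv, inv_pow]] at hinst
    have hxy1 : x^2*y ≠ 0 := mul_ne_zero (pow_ne_zero 2 hx) hy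
    have hxy2 : x*y^2 ≠ 0 := mul_ne_zero hx (pow_ne_zero 2 hy)
    have r1 := hgf (x^2*y) hxy1
    have r2 := hgf (x*y^2) hxy2
    have r3 := hgf x hx
    have r4 := hgf y hy
    have hxx : x * x⁻¹ = 1 := mul_inv_cancel₀ hx
    have hyy : y * y⁻¹ = 1 := mul_inv_cancel₀ hy
    linear_combination x^4*y^4*hinst + y^2*r1 + x^2*r2 - x^2*y^2*(r3 + r4)
      + x^2*y^4*(f y⁻¹)*(x*x⁻¹+1)*hxx + x^4*y^2*(f x⁻¹)*(y*y⁻¹+1)*hyy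
  have hgsq : ∀ x y : D, g (x^2*y) = x^2 * g y := by
    intro x y
    rcases eq_or_ne x 0 with rfl | hx
    · simp [g0]
    rcases eq_or_ne y 0 with rfl | hy
    · simp [g0]
    rcases eq_or_ne x y with rfl | hne
    · rw [show x^2*x = x^3 by ring]; exact hcg x
    have hxy : x + y ≠ 0 := by
      intro h
      exact hne (by linear_combination h - y*h2)
    have key : (x+y)^2 * g (x^2*y) = (x+y)^2 * (x^2 * g y) := by
      linear_combination hB x y hx hy + x^2 * hAg x y
        + (x*y*(g (x^2*y) - x^2*g y) - x^2*(g (x*y^2)) + x^2*y^2*(g x)) * h2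
    exact mul_left_cancel₀ (pow_ne_zero 2 hxy) key
  intro a b
  rcases eq_or_ne a 0 with rfl | ha
  · simp [f0]
  rcases eq_or_ne b 0 with rfl | hb
  · simp [f0, g0]
  have ht : a^2*b ≠ 0 := mul_ne_zero (pow_ne_zero 2 ha) hb
  have e1 := hfg _ ht
  have e2 := hgsq (a*b) ((a^2*b)⁻¹)
  rw [show (a*b)^2 * (a^2*b)⁻¹ = b by field_simp] at e2
  rw [e1, e2]
  ring
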